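/- Let A_1,…,A_n ⊂ ℤⁿ be finite sets with diagonal positive definite covariances C_i = diag(c^i_a)_{a∈A_i}. Let (p,q) ∈ ℝⁿ×ℝⁿ, z := exp(p+iq), and let f ∈ ℱ satisfy f(z) = 0 with D̂(f) invertible. Let DG_f : ℱ → ℂⁿ be the linear map ḟ ↦ D̂(f)^{−1}·(ḟ¹(z),…,ḟⁿ(z))ᵀ, and let DG_f^* denote its adjoint with respect to the inner product ⟨ḟ,ġ⟩ := Σ_{i=1}^n Σ_{a∈A_i} ḟ^i_a·conj(ġ^i_a)/c^i_a on ℱ and the standard Hermitian inner product on ℂⁿ. Then det( DG_f ∘ DG_f^* ) = ( Π_{i=1}^n Σ_{a∈A_i} c^i_a·e^{2⟨a,p⟩} ) / |det D̂(f)|². -/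

import Mathlib

open MeasureTheory Finset
open scoped ENNReal Pointwise

noncomputable section

namespace SparseRandom

variable {n : ℕ}

/-- `exp(p+iq) ∈ (ℂ*)ⁿ` in logarithmic coordinates. -/
def zexp (p q : Fin n → ℝ) : Fin n → ℂ :=
  fun j => Complex.exp ((p j : ℂ) + (q j : ℂ) * Complex.I)

/-- The (Laurent) monomial `z^a` for an integer exponent vector `a`. -/
def mono (z : Fin n → ℂ) (a : Fin n → ℤ) : ℂ := ∏ j, z j ^ (a j)

/-- Evaluation of the polynomial with support `A` and coefficient vector `f` at `z`. -/
def evalP {A : Finset (Fin n → ℤ)} (f : A → ℂ) (z : Fin n → ℂ) : ℂ :=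
  ∑ a : A, f a * mono z (a : Fin n → ℤ)

/-- The squared weighted norm `‖f‖²_{C⁻¹} = ∑_a |f_a|²/c_a`. -/
def nsq {A : Finset (Fin n → ℤ)} (c : (Fin n → ℤ) → ℝ) (f : A → ℂ) : ℝ :=
  ∑ a : A, Complex.normSq (f a) / c (a : Fin n → ℤ)

/-- The Gaussian probability measure `γ = ⊗ᵢ γ_{Aᵢ,Cᵢ}` on the system space
`ℱ = Πᵢ ℱ_ℂ(Aᵢ)`, given by its density w.r.t. Lebesgue measure. -/
def gauss (A : Fin n → Finset (Fin n → ℤ)) (c : Fin n → (Fin n → ℤ) → ℝ) :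
    Measure ((i : Fin n) → (A i) → ℂ) :=
  volume.withDensity fun f => ENNReal.ofReal
    (∏ i, (((2 * Real.pi) ^ (A i).card)⁻¹ * (∏ a : A i, c i (a : Fin n → ℤ))⁻¹ *
      Real.exp (- nsq (c i) (f i) / 2)))

/-- `z` is a common root of the system `f`. -/
def isRootAt (A : Fin n → Finset (Fin n → ℤ)) (f : (i : Fin n) → (A i) → ℂ)
    (z : Fin n → ℂ) : Prop :=
  ∀ i, evalP (f i) z = 0

/-- The Jacobian matrix `(∂f^i/∂x_j)` of the system `f` at a point `z ∈ (ℂ*)ⁿ`. -/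
def jac (A : Fin n → Finset (Fin n → ℤ)) (f : (i : Fin n) → (A i) → ℂ)
    (z : Fin n → ℂ) : Matrix (Fin n) (Fin n) ℂ :=
  Matrix.of fun i j => ∑ a : A i, f i a * ((a : Fin n → ℤ) j : ℂ) * mono z (a : Fin n → ℤ) / z j

/-- The matrix `D̂(f)_{ij} = z_j ∂f^i/∂x_j(z)`, i.e. the derivative of the system in the
logarithmic variable `p+iq`. -/
def Dhat (A : Fin n → Finset (Fin n → ℤ)) (f : (i : Fin n) → (A i) → ℂ)
    (z : Fin n → ℂ) : Matrix (Fin n) (Fin n) ℂ :=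
  Matrix.of fun i j => ∑ a : A i, f i a * ((a : Fin n → ℤ) j : ℂ) * mono z (a : Fin n → ℤ)

/-- `Σ_{(p,q)}`: systems with `exp(p+iq)` as a degenerate root. -/
def SigmaPQ (A : Fin n → Finset (Fin n → ℤ)) (p q : Fin n → ℝ) :
    Set ((i : Fin n) → (A i) → ℂ) :=
  {g | isRootAt A g (zexp p q) ∧ (jac A g (zexp p q)).det = 0}

/-- Multiprojective distance `d_ℙ(f,g)`. -/
def dP (c : Fin n → (Fin n → ℤ) → ℝ) {A : Fin n → Finset (Fin n → ℤ)}
    (f g : (i : Fin n) → (A i) → ℂ) : ℝ :=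
  Real.sqrt (∑ i, (⨅ lam : ℂ, nsq (c i) (fun a => f i a - lam * g i a)) / nsq (c i) (f i))

/-- Distance from `f` to a set `S` of systems. -/
def dPS (c : Fin n → (Fin n → ℤ) → ℝ) {A : Fin n → Finset (Fin n → ℤ)}
    (f : (i : Fin n) → (A i) → ℂ) (S : Set ((i : Fin n) → (A i) → ℂ)) : ℝ :=
  sInf ((dP c f) '' S)

/-- The image of `A ⊂ ℤⁿ` in `ℝⁿ`. -/
def coeA (A : Finset (Fin n → ℤ)) : Set (Fin n → ℝ) :=
  (fun (a : Fin n → ℤ) (j : Fin n) => (a j : ℝ)) '' (A : Set (Fin n → ℤ))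

/-- The Kähler potential `g_A(p) = ½ log ∑_{a∈A} c_a e^{2⟨a,p⟩}`. -/
def gA (A : Finset (Fin n → ℤ)) (c : (Fin n → ℤ) → ℝ) (p : Fin n → ℝ) : ℝ :=
  (1 / 2) * Real.log (∑ a : A, c (a : Fin n → ℤ) * Real.exp (2 * ∑ j, ((a : Fin n → ℤ) j : ℝ) * p j))

/-- `H_A(p) = ½ ∇² g_A(p)`, half the Hessian of the Kähler potential. -/
def HessA (A : Finset (Fin n → ℤ)) (c : (Fin n → ℤ) → ℝ) (p : Fin n → ℝ) :
    Matrix (Fin n) (Fin n) ℝ :=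
  Matrix.of fun j k =>
    (1 / 2) * fderiv ℝ (fun x => fderiv ℝ (gA A c) x (Pi.single j 1)) p (Pi.single k 1)

/-- The mixed integrand `I(p)`, the coefficient of the volume form in
`(−1)^{n(n−1)/2} ω_{A_1} ∧ ⋯ ∧ ω_{A_n}`. -/
def mixedI (A : Fin n → Finset (Fin n → ℤ)) (c : Fin n → (Fin n → ℤ) → ℝ)
    (p : Fin n → ℝ) : ℝ :=
  ∑ σ : Equiv.Perm (Fin n), ∑ τ : Equiv.Perm (Fin n),
    ((Equiv.Perm.sign σ : ℤ) : ℝ) * ((Equiv.Perm.sign τ : ℤ) : ℝ) *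
      ∏ i, HessA (A i) (c i) p (σ i) (τ i)

end SparseRandom

namespace SparseRandom

variable {n : ℕ}

/-- The standard Hermitian inner product on `ℂⁿ`. -/
def innerCn (x y : Fin n → ℂ) : ℂ := ∑ i, x i * (starRingEnd ℂ) (y i)

/-- The weighted Hermitian inner product `⟨ḟ,ġ⟩ = ∑ᵢ ∑_a ḟ^i_a·conj(ġ^i_a)/c^i_a` on the
system space `ℱ`. -/
def innerF (A : Fin n → Finset (Fin n → ℤ)) (c : Fin n → (Fin n → ℤ) → ℝ)
    (f g : (i : Fin n) → (A i) → ℂ) : ℂ :=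
  ∑ i, ∑ a : A i, f i a * (starRingEnd ℂ) (g i a) / (c i (a : Fin n → ℤ) : ℂ)

/-- The condition map `DG_f : ḟ ↦ D̂(f)⁻¹·(ḟ¹(z),…,ḟⁿ(z))ᵀ`. -/
def DG (A : Fin n → Finset (Fin n → ℤ)) (f : (i : Fin n) → (A i) → ℂ)
    (z : Fin n → ℂ) (df : (i : Fin n) → (A i) → ℂ) : Fin n → ℂ :=
  (Dhat A f z)⁻¹.mulVec fun i => evalP (df i) z


lemma normSq_mono (p q : Fin n → ℝ) (a : Fin n → ℤ) :
    (Complex.normSq (mono (zexp p q) a) : ℝ) =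
      Real.exp (2 * ∑ j, (a j : ℝ) * p j) := by
  have h1 : mono (zexp p q) a
      = Complex.exp (∑ j, (a j : ℂ) * ((p j : ℂ) + (q j : ℂ) * Complex.I)) := by
    rw [Complex.exp_sum]
    refine Finset.prod_congr rfl fun j _ => ?_
    rw [zexp, ← Complex.exp_int_mul]
  have hsq : ∀ x : ℝ, Real.exp x ^ 2 = Real.exp (2*x) := fun x => by
    rw [← Real.exp_nat_mul]; norm_num
  have hre : (∑ j, (a j : ℂ) * ((p j : ℂ) + (q j : ℂ) * Complex.I)).re
      = ∑ j, (a j : ℝ) * p j := by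
    rw [Complex.re_sum]
    refine Finset.sum_congr rfl fun j _ => ?_
    simp [Complex.mul_re]
  rw [h1, Complex.normSq_eq_norm_sq, Complex.norm_exp, hsq, hre]

lemma evalP_single {A : Finset (Fin n → ℤ)} (a : A) (z : Fin n → ℂ) :
    evalP (Pi.single a (1:ℂ)) z = mono z (a : Fin n → ℤ) := by
  simp [evalP, Pi.single_apply, ite_mul]

lemma evalP_zero {A : Finset (Fin n → ℤ)} (z : Fin n → ℂ) :
    evalP (0 : A → ℂ) z = 0 := by
  simp [evalP]


lemma DG_apply (A : Fin n → Finset (Fin n → ℤ)) (f : (i : Fin n) → (A i) → ℂ)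
    (z : Fin n → ℂ) (df : (i : Fin n) → (A i) → ℂ) (i : Fin n) :
    DG A f z df i = ∑ j, (Dhat A f z)⁻¹ i j * evalP (df j) z := by
  simp [DG, Matrix.mulVec, dotProduct]

lemma gstar_formula (A : Fin n → Finset (Fin n → ℤ))
    (c : Fin n → (Fin n → ℤ) → ℝ) (hc : ∀ i, ∀ a ∈ A i, 0 < c i a)
    (z : Fin n → ℂ) (f : (i : Fin n) → (A i) → ℂ)
    (Gstar : (Fin n → ℂ) → ((i : Fin n) → (A i) → ℂ))
    (hadj : ∀ (df : (i : Fin n) → (A i) → ℂ) (u : Fin n → ℂ),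
      innerCn (DG A f z df) u = innerF A c df (Gstar u))
    (u : Fin n → ℂ) (j : Fin n) (a : A j) :
    Gstar u j a = (c j (a : Fin n → ℤ) : ℂ) * (starRingEnd ℂ) (mono z (a : Fin n → ℤ)) *
      ∑ i, (starRingEnd ℂ) ((Dhat A f z)⁻¹ i j) * u i := by
  have hcne : (c j (a : Fin n → ℤ) : ℂ) ≠ 0 := by
    exact_mod_cast (hc j a a.2).ne'
  have h := hadj (Pi.single j (Pi.single a (1:ℂ))) u
  have hL : innerCn (DG A f z (Pi.single j (Pi.single a (1:ℂ)))) u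
      = mono z (a : Fin n → ℤ) *
        ∑ i, (Dhat A f z)⁻¹ i j * (starRingEnd ℂ) (u i) := by
    rw [innerCn, Finset.mul_sum]
    refine Finset.sum_congr rfl fun i _ => ?_
    rw [DG_apply]
    have : ∀ j' : Fin n, (Dhat A f z)⁻¹ i j' *
          evalP ((Pi.single j (Pi.single a (1:ℂ)) : (i : Fin n) → (A i) → ℂ) j') z
        = if j' = j then (Dhat A f z)⁻¹ i j * mono z (a : Fin n → ℤ) else 0 := by
      intro j'
      rcases eq_or_ne j' j with rfl | hne
      · simp [evalP_single]
      · simp [hne, Pi.single_apply, evalP_zero]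
    rw [Finset.sum_congr rfl fun j' _ => this j', Finset.sum_ite_eq' Finset.univ j]
    simp; ring
  have hR : innerF A c (Pi.single j (Pi.single a (1:ℂ))) (Gstar u)
      = (starRingEnd ℂ) (Gstar u j a) / (c j (a : Fin n → ℤ) : ℂ) := by
    rw [innerF]
    have : ∀ j' : Fin n, (∑ a' : A j',
          (Pi.single j (Pi.single a (1:ℂ)) : (i : Fin n) → (A i) → ℂ) j' a' *
          (starRingEnd ℂ) (Gstar u j' a') / (c j' (a' : Fin n → ℤ) : ℂ))
        = if j' = j then (starRingEnd ℂ) (Gstar u j a) / (c j (a : Fin n → ℤ) : ℂ) else 0 := by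
      intro j'
      rcases eq_or_ne j' j with rfl | hne
      · simp only [Pi.single_eq_same, if_pos rfl]
        have h4 : ∀ a' : A j', (Pi.single a (1:ℂ) : {x // x ∈ A j'} → ℂ) a' *
              (starRingEnd ℂ) (Gstar u j' a') / (c j' (a' : Fin n → ℤ) : ℂ)
            = if a' = a then (starRingEnd ℂ) (Gstar u j' a) / (c j' (a : Fin n → ℤ) : ℂ)
              else 0 := by
          intro a'
          rcases eq_or_ne a' a with rfl | hne'
          · simp
          · simp [Pi.single_apply, hne']
        rw [Finset.sum_congr rfl fun a' _ => h4 a', Finset.sum_ite_eq' Finset.univ a]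
        simp
      · simp [hne, Pi.single_apply]
    rw [Finset.sum_congr rfl fun j' _ => this j', Finset.sum_ite_eq' Finset.univ j]
    simp
  rw [hL, hR] at h
  have h2 : (starRingEnd ℂ) (Gstar u j a)
      = (c j (a : Fin n → ℤ) : ℂ) * (mono z (a : Fin n → ℤ) *
          ∑ i, (Dhat A f z)⁻¹ i j * (starRingEnd ℂ) (u i)) := by
    rw [eq_div_iff hcne] at h
    linear_combination -h
  have h3 := congrArg (starRingEnd ℂ) h2
  rw [Complex.conj_conj] at h3
  rw [h3]
  simp [map_mul, map_sum, Complex.conj_conj, Complex.conj_ofReal]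
  ring

end SparseRandom

open SparseRandom

/-- **Determinant of the condition matrix.** If `z = exp(p+iq)` is a
nondegenerate root of `f` and `DG_f^*` is the adjoint of `DG_f` with respect to the
weighted inner product on `ℱ` and the standard Hermitian product on `ℂⁿ`, then
`det(DG_f ∘ DG_f^*) = (∏ᵢ ∑_{a∈Aᵢ} cⁱ_a·e^{2⟨a,p⟩}) / |det D̂(f)|²`. -/
theorem statement14 (n : ℕ) (hn : 1 ≤ n) (A : Fin n → Finset (Fin n → ℤ))
    (c : Fin n → (Fin n → ℤ) → ℝ) (hc : ∀ i, ∀ a ∈ A i, 0 < c i a)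
    (p q : Fin n → ℝ) (f : (i : Fin n) → (A i) → ℂ)
    (hroot : isRootAt A f (zexp p q))
    (hnd : (Dhat A f (zexp p q)).det ≠ 0)
    (Gstar : (Fin n → ℂ) → ((i : Fin n) → (A i) → ℂ))
    (hadj : ∀ (df : (i : Fin n) → (A i) → ℂ) (u : Fin n → ℂ),
      innerCn (DG A f (zexp p q) df) u = innerF A c df (Gstar u)) :
    (Matrix.of fun i k : Fin n => DG A f (zexp p q) (Gstar (Pi.single k 1)) i).det
      = (((∏ i, ∑ a : A i, c i (a : Fin n → ℤ) *
            Real.exp (2 * ∑ j, ((a : Fin n → ℤ) j : ℝ) * p j)) /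
          ‖(Dhat A f (zexp p q)).det‖ ^ 2 : ℝ) : ℂ) := by
  set z := zexp p q with hzdef
  set E := (Dhat A f z)⁻¹ with hEdef
  set S : Fin n → ℝ := fun j => ∑ a : A j, c j (a : Fin n → ℤ) *
      Real.exp (2 * ∑ l, ((a : Fin n → ℤ) l : ℝ) * p l) with hSdef
  have hGs := gstar_formula A c hc z f Gstar hadj
  have hEval : ∀ k j : Fin n, evalP (Gstar (Pi.single k (1:ℂ)) j) z
      = ((S j : ℝ) : ℂ) * (starRingEnd ℂ) (E k j) := by
    intro k j
    rw [evalP]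
    have hterm : ∀ a : A j, Gstar (Pi.single k (1:ℂ)) j a * mono z (a : Fin n → ℤ)
        = ((c j (a : Fin n → ℤ) * Real.exp (2 * ∑ l, ((a : Fin n → ℤ) l : ℝ) * p l) : ℝ) : ℂ)
            * (starRingEnd ℂ) (E k j) := by
      intro a
      rw [hGs]
      have hsum : (∑ i, (starRingEnd ℂ) (E i j) * (Pi.single k (1:ℂ) : Fin n → ℂ) i)
          = (starRingEnd ℂ) (E k j) := by
        have : ∀ i : Fin n, (starRingEnd ℂ) (E i j) * (Pi.single k (1:ℂ) : Fin n → ℂ) i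
            = if i = k then (starRingEnd ℂ) (E k j) else 0 := by
          intro i
          rcases eq_or_ne i k with rfl | hne
          · simp
          · simp [Pi.single_apply, hne]
        rw [Finset.sum_congr rfl fun i _ => this i, Finset.sum_ite_eq' Finset.univ k]
        simp
      rw [hsum]
      have hm : (starRingEnd ℂ) (mono z (a : Fin n → ℤ)) * mono z (a : Fin n → ℤ)
          = ((Complex.normSq (mono z (a : Fin n → ℤ)) : ℝ) : ℂ) := by
        rw [mul_comm, Complex.mul_conj]
      calc (c j (a : Fin n → ℤ) : ℂ) * (starRingEnd ℂ) (mono z (a : Fin n → ℤ)) *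
            (starRingEnd ℂ) (E k j) * mono z (a : Fin n → ℤ)
          = (c j (a : Fin n → ℤ) : ℂ) *
              ((starRingEnd ℂ) (mono z (a : Fin n → ℤ)) * mono z (a : Fin n → ℤ)) *
              (starRingEnd ℂ) (E k j) := by ring
        _ = ((c j (a : Fin n → ℤ) * Real.exp (2 * ∑ l, ((a : Fin n → ℤ) l : ℝ) * p l) : ℝ) : ℂ)
              * (starRingEnd ℂ) (E k j) := by
            rw [hm, ← normSq_mono p q (a : Fin n → ℤ), ← hzdef]
            push_cast
            ring
    rw [Finset.sum_congr rfl fun a _ => hterm a, ← Finset.sum_mul, ← Complex.ofReal_sum]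
  have hM : (Matrix.of fun i k : Fin n => DG A f z (Gstar (Pi.single k 1)) i)
      = E * Matrix.diagonal (fun j => ((S j : ℝ) : ℂ)) * E.conjTranspose := by
    ext i k
    rw [Matrix.of_apply, DG_apply, Matrix.mul_apply]
    refine Finset.sum_congr rfl fun j _ => ?_
    rw [Matrix.mul_diagonal, Matrix.conjTranspose_apply, Complex.star_def, hEval, ← hEdef]
    ring
  rw [hM, Matrix.det_mul, Matrix.det_mul, Matrix.det_diagonal, Matrix.det_conjTranspose]
  have hdetE : E.det = ((Dhat A f z).det)⁻¹ := by
    rw [hEdef, Matrix.det_nonsing_inv, Ring.inverse_eq_inv']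
  rw [hdetE, Complex.star_def, map_inv₀]
  have hprod : ((∏ i, S i : ℝ) : ℂ) = ∏ i, ((S i : ℝ) : ℂ) := by push_cast; rfl
  have habs2 : ((‖(Dhat A f z).det‖ ^ 2 : ℝ) : ℂ)
      = (Dhat A f z).det * (starRingEnd ℂ) ((Dhat A f z).det) := by
    rw [Complex.sq_norm]
    exact (Complex.mul_conj _).symm
  have hcne : (starRingEnd ℂ) ((Dhat A f z).det) ≠ 0 := by
    simpa using hnd
  rw [Complex.ofReal_div, habs2, hprod]
  field_simp
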